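/- (Conditional version of the exactness theorem given an ancillary statistic.) Fix s₀, θ₀ ∈ ℝ. Suppose G_S(u,θ) := S(G(u,θ)) is nondecreasing in θ for every u, that Q(s,u) := {θ ∈ ℝ : G_S(u,θ) = s} is nonempty for every u and s, and let Q⁺_s(u) := sup Q(s,u). Let ν denote the law of the ancillary statistic G_A(U), and for a in the range of G_A let μ_a be a regular conditional distribution (conditional kernel) of U given G_A(U) = a, and let F_{S|a}(s, θ₀) := μ_a({u : G_S(u,θ₀) ≤ s}) be the corresponding conditional distribution function of G_S(U,θ₀) given G_A(U) = a. Then for ν-almost every a, μ_a({u : Q⁺_{s₀}(u) ≤ θ₀}) = 1 − lim_{ε↓0} F_{S|a}(s₀, θ₀ + ε); in particular, if additionally μ_a({u : G_S(u,θ) = s}) = 0 for all θ, s and ν-a.e. a, then for ν-almost every a the conditional fiducial distribution is exact: μ_a({u : Q⁺_{s₀}(u) ≤ θ₀}) = 1 − F_{S|a}(s₀, θ₀). -/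

import Mathlib

open MeasureTheory Filter Set Topology ProbabilityTheory

/-- conditional version of the exactness theorem given an ancillary statistic.
For `ν`-almost every value `a` of the ancillary statistic,
`μ_a(Q⁺_{s₀} ≤ θ₀) = 1 − lim_{ε↓0} F_{S|a}(s₀, θ₀+ε)`; if moreover the conditional laws are
atomless, the conditional fiducial distribution is exact:
`μ_a(Q⁺_{s₀} ≤ θ₀) = 1 − F_{S|a}(s₀, θ₀)` for `ν`-a.e. `a`. -/
theorem fiducial_conditional_exactness
    {M : Type*} [MeasurableSpace M] [StandardBorelSpace M]
    {Ω : Type*} [MeasurableSpace Ω] (P : Measure Ω) [IsProbabilityMeasure P]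
    (U : Ω → M) (hU : Measurable U)
    (n : ℕ) (hn : 2 ≤ n)
    (G : M → ℝ → (Fin n → ℝ)) (hG : Measurable (Function.uncurry G))
    (S : (Fin n → ℝ) → ℝ) (A : (Fin n → ℝ) → (Fin (n - 1) → ℝ))
    (hinj : Function.Injective (fun x : Fin n → ℝ => (S x, A x)))
    (hsmooth : ContDiff ℝ 1 (fun x : Fin n → ℝ => (S x, A x)))
    (GA : M → (Fin (n - 1) → ℝ)) (hGA : Measurable GA)
    (hancillary : ∀ (u : M) (θ : ℝ), A (G u θ) = GA u)
    (GS : M → ℝ → ℝ) (hGS : ∀ (u : M) (θ : ℝ), GS u θ = S (G u θ))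
    (hmono : ∀ u : M, Monotone (GS u))
    (hne : ∀ (u : M) (s : ℝ), {θ : ℝ | GS u θ = s}.Nonempty)
    (s₀ θ₀ : ℝ)
    (ν : Measure (Fin (n - 1) → ℝ))
    (hν : ν = Measure.map (fun ω => GA (U ω)) P)
    (κ : Kernel (Fin (n - 1) → ℝ) M) [IsMarkovKernel κ]
    (hker : ∀ B : Set M, MeasurableSet B → ∀ C : Set (Fin (n - 1) → ℝ), MeasurableSet C →
      ∫⁻ a in C, κ a B ∂ν = P {ω : Ω | U ω ∈ B ∧ GA (U ω) ∈ C}) :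
    (∀ᵐ a ∂ν, ∃ L : ℝ,
      Tendsto (fun ε : ℝ => (κ a {u : M | GS u (θ₀ + ε) ≤ s₀}).toReal) (𝓝[>] 0) (𝓝 L) ∧
      (κ a {u : M |
        sSup (Real.toEReal '' {θ : ℝ | GS u θ = s₀}) ≤ (θ₀ : EReal)}).toReal = 1 - L) ∧
    ((∀ θ s : ℝ, ∀ᵐ a ∂ν, κ a {u : M | GS u θ = s} = 0) →
      ∀ᵐ a ∂ν,
        (κ a {u : M |
          sSup (Real.toEReal '' {θ : ℝ | GS u θ = s₀}) ≤ (θ₀ : EReal)}).toReal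
          = 1 - (κ a {u : M | GS u θ₀ ≤ s₀}).toReal) := by
  classical
  -- `S` is continuous, hence `GS u θ` is measurable in `u` for each `θ`.
  have hScont : Continuous S := hsmooth.continuous.fst
  have hGSmeas : ∀ θ : ℝ, Measurable fun u : M => GS u θ := by
    intro θ
    have : (fun u : M => GS u θ) = fun u => S (Function.uncurry G (u, θ)) := by
      funext u; simp [Function.uncurry, hGS]
    rw [this]
    exact (hScont.measurable.comp hG).comp (measurable_id.prodMk measurable_const)
  -- the family of sets `Aset ε`
  set Aset : ℝ → Set M := fun ε => {u : M | GS u (θ₀ + ε) ≤ s₀} with hAset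
  have hAmeas : ∀ ε : ℝ, MeasurableSet (Aset ε) := fun ε =>
    measurableSet_le (hGSmeas (θ₀ + ε)) measurable_const
  have hAanti : ∀ ⦃ε₁ ε₂ : ℝ⦄, ε₁ ≤ ε₂ → Aset ε₂ ⊆ Aset ε₁ := by
    intro ε₁ ε₂ h u hu
    exact le_trans (hmono u (by linarith : θ₀ + ε₁ ≤ θ₀ + ε₂)) hu
  -- the countable increasing union
  set Uinf : Set M := ⋃ k : ℕ, Aset (1 / (k + 1)) with hUinf
  have hUinfmeas : MeasurableSet Uinf := MeasurableSet.iUnion fun k => hAmeas _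
  have hUinfmono : Monotone fun k : ℕ => Aset (1 / ((k : ℝ) + 1)) := by
    intro k k' hk
    apply hAanti
    apply one_div_le_one_div_of_le (by positivity)
    have : (k : ℝ) ≤ (k' : ℝ) := Nat.cast_le.2 hk
    linarith
  -- every `Aset ε` with `ε > 0` is contained in `Uinf`
  have hA_sub : ∀ ε : ℝ, 0 < ε → Aset ε ⊆ Uinf := by
    intro ε hε
    obtain ⟨k, hk⟩ := exists_nat_one_div_lt hε
    exact (hAanti hk.le).trans (subset_iUnion (fun k : ℕ => Aset (1 / ((k : ℝ) + 1))) k)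
  -- characterization of the event `{Q⁺ ≤ θ₀}`
  set E : Set M := {u : M | sSup (Real.toEReal '' {θ : ℝ | GS u θ = s₀}) ≤ (θ₀ : EReal)}
    with hEdef
  have hEchar : E = Uinfᶜ := by
    ext u
    simp only [hEdef, hUinf, mem_setOf_eq, mem_compl_iff, mem_iUnion, not_exists, hAset,
      sSup_le_iff, forall_mem_image, EReal.coe_le_coe_iff, not_le]
    constructor
    · intro h k
      obtain ⟨θ₁, hθ₁⟩ := hne u s₀
      have hθ₁le : θ₁ ≤ θ₀ := h hθ₁
      have hpos : (0:ℝ) < 1 / ((k:ℝ)+1) := by positivity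
      have h1 : s₀ ≤ GS u (θ₀ + 1 / ((k : ℝ) + 1)) := by
        rw [← hθ₁]
        exact hmono u (by linarith)
      rcases lt_or_eq_of_le h1 with h2 | h2
      · exact h2
      · exfalso
        have := h h2.symm
        linarith
    · intro h θ hθ
      by_contra hgt
      push_neg at hgt
      obtain ⟨k, hk⟩ := exists_nat_one_div_lt (by linarith : (0:ℝ) < θ - θ₀)
      have h1 : GS u (θ₀ + 1 / ((k : ℝ) + 1)) ≤ GS u θ := hmono u (by linarith)
      have h2 := h k
      rw [hθ] at h1
      linarith
  have hκfin : ∀ (a : Fin (n-1) → ℝ) (s : Set M), κ a s ≠ ⊤ := fun a s => measure_ne_top _ _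
  -- the limit of the conditional CDF from the right
  have hTend : ∀ a, Tendsto (fun ε : ℝ => (κ a (Aset ε)).toReal) (𝓝[>] 0)
      (𝓝 ((κ a Uinf).toReal)) := by
    intro a
    have hf_anti : Antitone fun ε : ℝ => (κ a (Aset ε)).toReal := by
      intro ε₁ ε₂ h
      exact ENNReal.toReal_mono (hκfin a _) (measure_mono (hAanti h))
    have htends := hf_anti.tendsto_nhdsGT 0
    have hlub : IsLUB ((fun ε : ℝ => (κ a (Aset ε)).toReal) '' Ioi 0) ((κ a Uinf).toReal) := by
      constructor
      · rintro x ⟨ε, hε, rfl⟩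
        exact ENNReal.toReal_mono (hκfin a _) (measure_mono (hA_sub ε hε))
      · intro b hb
        have hseq : Tendsto (fun k : ℕ => (κ a (Aset (1 / ((k : ℝ) + 1)))).toReal)
            atTop (𝓝 ((κ a Uinf).toReal)) := by
          have h := tendsto_measure_iUnion_atTop (μ := κ a) hUinfmono
          exact ((ENNReal.tendsto_toReal (hκfin a Uinf)).comp h)
        refine le_of_tendsto hseq (Eventually.of_forall fun k => ?_)
        exact hb ⟨1 / ((k : ℝ) + 1), mem_Ioi.2 (by positivity), rfl⟩
    rwa [hlub.csSup_eq ⟨_, ⟨1, by norm_num, rfl⟩⟩] at htends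
  have hEval : ∀ a, (κ a E).toReal = 1 - (κ a Uinf).toReal := by
    intro a
    rw [hEchar, prob_compl_eq_one_sub hUinfmeas,
      ENNReal.toReal_sub_of_le prob_le_one ENNReal.one_ne_top, ENNReal.toReal_one]
  refine ⟨Eventually.of_forall fun a => ⟨(κ a Uinf).toReal, hTend a, hEval a⟩, ?_⟩
  -- second part
  intro hatomless
  filter_upwards [hatomless θ₀ s₀] with a hnull
  rw [hEval a]
  congr 1
  -- it suffices to show `κ a Uinf = κ a {GS u θ₀ ≤ s₀}`.
  have hUinfsubB : Uinf ⊆ {u : M | GS u θ₀ ≤ s₀} := by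
    rintro u hu
    obtain ⟨k, hk⟩ := mem_iUnion.1 hu
    have hpos : (0:ℝ) < 1 / ((k:ℝ)+1) := by positivity
    exact le_trans (hmono u (by linarith : θ₀ ≤ θ₀ + 1 / ((k:ℝ)+1))) hk
  have hdiff : {u : M | GS u θ₀ ≤ s₀} \ Uinf ⊆ {u : M | GS u θ₀ = s₀} := by
    rintro u ⟨hu1, hu2⟩
    simp only [hUinf, mem_iUnion, not_exists, hAset, mem_setOf_eq, not_le] at hu2
    obtain ⟨θ₁, hθ₁⟩ := hne u s₀
    have hθ₁le : θ₁ ≤ θ₀ := by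
      by_contra hgt
      push_neg at hgt
      obtain ⟨k, hk⟩ := exists_nat_one_div_lt (by linarith : (0:ℝ) < θ₁ - θ₀)
      have h1 : GS u (θ₀ + 1 / ((k : ℝ) + 1)) ≤ GS u θ₁ := hmono u (by linarith)
      have h2 := hu2 k
      rw [hθ₁] at h1
      linarith
    have hge : s₀ ≤ GS u θ₀ := hθ₁ ▸ hmono u hθ₁le
    exact le_antisymm hu1 hge
  have hκeq : κ a Uinf = κ a {u : M | GS u θ₀ ≤ s₀} := by
    refine le_antisymm (measure_mono hUinfsubB) ?_
    calc κ a {u : M | GS u θ₀ ≤ s₀}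
        ≤ κ a (Uinf ∪ ({u : M | GS u θ₀ ≤ s₀} \ Uinf)) :=
          measure_mono (fun u hu => by
            by_cases h : u ∈ Uinf
            · exact Or.inl h
            · exact Or.inr ⟨hu, h⟩)
      _ ≤ κ a Uinf + κ a ({u : M | GS u θ₀ ≤ s₀} \ Uinf) := measure_union_le _ _
      _ ≤ κ a Uinf + κ a {u : M | GS u θ₀ = s₀} :=
          add_le_add le_rfl (measure_mono hdiff)
      _ = κ a Uinf := by rw [hnull, add_zero]
  rw [hκeq]
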